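/- Let R̃ = k[x₁,…,xₙ][s, x₁',…,x_k'] / (x₁ - s·x₁', …, x_k - s·x_k'). Then the k-algebra homomorphism from k[x₁,…,xₙ][s, x₁',…,x_k'] to the subring of k[x₁,…,xₙ][s, s⁻¹] generated by s, x₁/s, …, x_k/s sending xᵢ ↦ xᵢ, s ↦ s, xᵢ' ↦ xᵢ/s induces an isomorphism of R̃ with the extended Rees algebra ⨁_{a∈ℤ} J^a s^{-a} where J = (x₁,…,x_k) (with J^a = (1) for a ≤ 0). -/

import Mathlib

open MvPolynomial

namespace ExtReesAux

variable {k : Type*} [Field k] {n kk : ℕ}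

noncomputable def phiFun (hkn : kk ≤ n) :
    Fin n ⊕ (Unit ⊕ Fin kk) → LaurentPolynomial (MvPolynomial (Fin n) k) :=
  Sum.elim (fun i => LaurentPolynomial.C (X i))
    (Sum.elim (fun _ => LaurentPolynomial.T 1)
      (fun j => LaurentPolynomial.C (X (Fin.castLE hkn j)) * LaurentPolynomial.T (-1)))

lemma algebraMap_L (r : k) :
    algebraMap k (LaurentPolynomial (MvPolynomial (Fin n) k)) r
      = LaurentPolynomial.C (MvPolynomial.C r) := by
  rw [IsScalarTower.algebraMap_apply k (MvPolynomial (Fin n) k)]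
  rfl

noncomputable def Jid (hkn : kk ≤ n) : Ideal (MvPolynomial (Fin n) k) :=
  Ideal.span (Set.range fun j : Fin kk => (X (Fin.castLE hkn j) : MvPolynomial (Fin n) k))

def eInt (d : (Fin n ⊕ (Unit ⊕ Fin kk)) →₀ ℕ) : ℤ :=
  (d (Sum.inr (Sum.inl ())) : ℤ) - ∑ j : Fin kk, (d (Sum.inr (Sum.inr j)) : ℤ)

noncomputable def mExp (d : (Fin n ⊕ (Unit ⊕ Fin kk)) →₀ ℕ) : Fin n →₀ ℕ :=
  Finsupp.equivFunOnFinite.symm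
    (fun i => d (Sum.inl i) + (if h : (i : ℕ) < kk then d (Sum.inr (Sum.inr ⟨i.1, h⟩)) else 0))

lemma mExp_apply (d : (Fin n ⊕ (Unit ⊕ Fin kk)) →₀ ℕ) (i : Fin n) :
    mExp d i = d (Sum.inl i) + (if h : (i : ℕ) < kk then d (Sum.inr (Sum.inr ⟨i.1, h⟩)) else 0) :=
  rfl

lemma eInt_add (a b : (Fin n ⊕ (Unit ⊕ Fin kk)) →₀ ℕ) : eInt (a + b) = eInt a + eInt b := by
  simp only [eInt, Finsupp.add_apply]
  push_cast
  rw [Finset.sum_add_distrib]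
  ring

lemma mExp_add (a b : (Fin n ⊕ (Unit ⊕ Fin kk)) →₀ ℕ) : mExp (a + b) = mExp a + mExp b := by
  ext i
  simp only [mExp_apply, Finsupp.add_apply]
  split <;> ring

lemma eInt_single_inl (i : Fin n) (e : ℕ) :
    eInt (Finsupp.single (Sum.inl i : Fin n ⊕ (Unit ⊕ Fin kk)) e) = 0 := by
  simp [eInt, Finsupp.single_apply]

lemma eInt_single_s (e : ℕ) :
    eInt (Finsupp.single (Sum.inr (Sum.inl ()) : Fin n ⊕ (Unit ⊕ Fin kk)) e) = e := by
  simp [eInt, Finsupp.single_apply]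

lemma eInt_single_x' (j : Fin kk) (e : ℕ) :
    eInt (Finsupp.single (Sum.inr (Sum.inr j) : Fin n ⊕ (Unit ⊕ Fin kk)) e) = -e := by
  simp [eInt, Finsupp.single_apply, Finset.sum_ite_eq]

lemma mExp_single_inl (i : Fin n) (e : ℕ) :
    mExp (Finsupp.single (Sum.inl i : Fin n ⊕ (Unit ⊕ Fin kk)) e) = Finsupp.single i e := by
  ext i'
  simp only [mExp_apply, Finsupp.single_apply, Sum.inl.injEq, Sum.inr.injEq, Fin.ext_iff,
    reduceCtorEq, if_false, add_zero, zero_add]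
  split_ifs <;> omega
lemma mExp_single_s (e : ℕ) :
    mExp (Finsupp.single (Sum.inr (Sum.inl ()) : Fin n ⊕ (Unit ⊕ Fin kk)) e) = 0 := by
  ext i'
  simp only [mExp_apply, Finsupp.single_apply, Sum.inl.injEq, Sum.inr.injEq, Fin.ext_iff,
    reduceCtorEq, if_false, add_zero, zero_add, Finsupp.coe_zero, Pi.zero_apply]
  split_ifs <;> omega

lemma mExp_single_x' (hkn : kk ≤ n) (j : Fin kk) (e : ℕ) :
    mExp (Finsupp.single (Sum.inr (Sum.inr j) : Fin n ⊕ (Unit ⊕ Fin kk)) e)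
      = Finsupp.single (Fin.castLE hkn j) e := by
  ext i'
  simp only [mExp_apply, Finsupp.single_apply, Sum.inl.injEq, Sum.inr.injEq, Fin.ext_iff,
    Fin.coe_castLE, reduceCtorEq, if_false, add_zero, zero_add]
  split_ifs <;> omega

lemma phi_monomial (hkn : kk ≤ n) (d : (Fin n ⊕ (Unit ⊕ Fin kk)) →₀ ℕ) (c : k) :
    aeval (phiFun hkn) (monomial d c)
      = LaurentPolynomial.C (monomial (mExp d) c) * LaurentPolynomial.T (eInt d) := by
  induction d using Finsupp.induction with
  | zero =>
    have hm : mExp (0 : (Fin n ⊕ (Unit ⊕ Fin kk)) →₀ ℕ) = 0 := by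
      ext i; simp [mExp_apply]
    have he : eInt (0 : (Fin n ⊕ (Unit ⊕ Fin kk)) →₀ ℕ) = 0 := by simp [eInt]
    rw [hm, he, monomial_zero', monomial_zero', aeval_C, algebraMap_L,
      LaurentPolynomial.T_zero, mul_one]
  | single_add v e f hv he ih =>
    rw [monomial_single_add, map_mul, map_pow, aeval_X, ih, mExp_add, eInt_add]
    rcases v with i | u | j
    · rw [mExp_single_inl, eInt_single_inl, zero_add, monomial_single_add]
      show LaurentPolynomial.C (X i) ^ e * _ = _
      rw [← map_pow, map_mul]
      ring
    · rw [mExp_single_s, eInt_single_s, zero_add]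
      show LaurentPolynomial.T 1 ^ e * _ = _
      rw [LaurentPolynomial.T_pow, mul_one, LaurentPolynomial.T_add]
      ring
    · rw [mExp_single_x' hkn, eInt_single_x', monomial_single_add]
      show (LaurentPolynomial.C (X (Fin.castLE hkn j)) * LaurentPolynomial.T (-1)) ^ e * _ = _
      rw [mul_pow, ← map_pow, LaurentPolynomial.T_pow,
        (by push_cast; ring : ((e : ℤ)) * (-1) = -(e : ℤ)), LaurentPolynomial.T_add, map_mul]
      ring

lemma key_inj (hkn : kk ≤ n) {d d' : (Fin n ⊕ (Unit ⊕ Fin kk)) →₀ ℕ}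
    (hd : ∀ j : Fin n, (j : ℕ) < kk → d (Sum.inl j) = 0)
    (hd' : ∀ j : Fin n, (j : ℕ) < kk → d' (Sum.inl j) = 0)
    (he : eInt d = eInt d') (hm : mExp d = mExp d') : d = d' := by
  have hx' : ∀ j : Fin kk, d (Sum.inr (Sum.inr j)) = d' (Sum.inr (Sum.inr j)) := by
    intro j
    have h1 : mExp d (Fin.castLE hkn j) = mExp d' (Fin.castLE hkn j) := by rw [hm]
    have hc : ((Fin.castLE hkn j : Fin n) : ℕ) < kk := j.2
    rw [mExp_apply, mExp_apply, dif_pos hc, dif_pos hc, hd _ hc, hd' _ hc,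
      zero_add, zero_add] at h1
    exact h1
  have hs : d (Sum.inr (Sum.inl ())) = d' (Sum.inr (Sum.inl ())) := by
    have h2 := he
    unfold eInt at h2
    have h3 : ∑ j : Fin kk, (d (Sum.inr (Sum.inr j)) : ℤ)
        = ∑ j : Fin kk, (d' (Sum.inr (Sum.inr j)) : ℤ) :=
      Finset.sum_congr rfl fun j _ => by rw [hx' j]
    omega
  ext v
  rcases v with i | u | j
  · by_cases h : (i : ℕ) < kk
    · rw [hd i h, hd' i h]
    · have h1 : mExp d i = mExp d' i := by rw [hm]
      rwa [mExp_apply, mExp_apply, dif_neg h, dif_neg h, add_zero, add_zero] at h1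
  · cases u; exact hs
  · exact hx' j

lemma good_ker_zero (hkn : kk ≤ n) (q : MvPolynomial (Fin n ⊕ (Unit ⊕ Fin kk)) k)
    (hq : ∀ m ∈ q.support, ∀ j : Fin n, (j : ℕ) < kk → m (Sum.inl j) = 0)
    (h0 : aeval (phiFun hkn) q = (0 : LaurentPolynomial (MvPolynomial (Fin n) k))) :
    q = 0 := by
  apply MvPolynomial.ext
  intro d₀
  rw [coeff_zero]
  by_cases hd₀ : d₀ ∈ q.support
  swap
  · exact notMem_support_iff.mp hd₀
  have hq0 : (0 : LaurentPolynomial (MvPolynomial (Fin n) k)) = ∑ d ∈ q.support,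
      (AddMonoidAlgebra.single (eInt d) (monomial (mExp d) (coeff d q)) :
        LaurentPolynomial (MvPolynomial (Fin n) k)) := by
    rw [← h0]
    conv_lhs => rw [q.as_sum]
    rw [map_sum]
    exact Finset.sum_congr rfl fun d _ => by
      rw [phi_monomial hkn, ← LaurentPolynomial.single_eq_C_mul_T]
  have h2 := congrArg
    (fun x : LaurentPolynomial (MvPolynomial (Fin n) k) =>
      MvPolynomial.coeff (mExp d₀) ((AddMonoidAlgebra.coeff x : ℤ →₀ MvPolynomial (Fin n) k) (eInt d₀))) hq0
  rw [AddMonoidAlgebra.coeff_sum, Finsupp.finset_sum_apply, MvPolynomial.coeff_sum] at h2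
  rw [Finset.sum_eq_single d₀ ?h1 ?h2] at h2
  case h1 =>
    intro d hd hne
    rw [AddMonoidAlgebra.coeff_single, Finsupp.single_apply]
    split
    · next heq =>
      rw [coeff_monomial]
      split
      · next hmeq =>
        exact absurd (key_inj hkn (hq d hd) (hq d₀ hd₀) heq hmeq) hne
      · rfl
    · exact coeff_zero _
  case h2 => intro h; exact absurd hd₀ h
  rw [AddMonoidAlgebra.coeff_single, Finsupp.single_eq_same, coeff_monomial, if_pos rfl] at h2
  have h3 : MvPolynomial.coeff (mExp d₀)
      ((AddMonoidAlgebra.coeff (0 : LaurentPolynomial (MvPolynomial (Fin n) k))) (eInt d₀)) = 0 := by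
    rfl
  rw [h3] at h2
  exact h2.symm

noncomputable def psiFun :
    Fin n ⊕ (Unit ⊕ Fin kk) → MvPolynomial (Fin n ⊕ (Unit ⊕ Fin kk)) k :=
  Sum.elim
    (fun i => if h : (i : ℕ) < kk then
        X (Sum.inr (Sum.inl ())) * X (Sum.inr (Sum.inr ⟨i.1, h⟩))
      else X (Sum.inl i))
    (fun w => X (Sum.inr w))

noncomputable def Igens (hkn : kk ≤ n) : Set (MvPolynomial (Fin n ⊕ (Unit ⊕ Fin kk)) k) :=
  Set.range fun j : Fin kk =>
    (X (.inl (Fin.castLE hkn j)) - X (.inr (.inl ())) * X (.inr (.inr j)) :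
      MvPolynomial (Fin n ⊕ (Unit ⊕ Fin kk)) k)

lemma gen_mem (hkn : kk ≤ n) (i : Fin n) (h : (i : ℕ) < kk) :
    (X (Sum.inl i) - X (Sum.inr (Sum.inl ())) * X (Sum.inr (Sum.inr ⟨i.1, h⟩)) :
      MvPolynomial (Fin n ⊕ (Unit ⊕ Fin kk)) k) ∈ Ideal.span (Igens hkn) := by
  apply Ideal.subset_span
  exact ⟨⟨i.1, h⟩, rfl⟩

lemma sub_psi_mem (hkn : kk ≤ n) (p : MvPolynomial (Fin n ⊕ (Unit ⊕ Fin kk)) k) :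
    p - aeval psiFun p ∈ Ideal.span (Igens hkn) := by
  induction p using MvPolynomial.induction_on with
  | C a =>
    rw [aeval_C, MvPolynomial.algebraMap_eq, sub_self]
    exact zero_mem _
  | add p q hp hq =>
    rw [map_add, show p + q - (aeval psiFun p + aeval psiFun q)
      = (p - aeval psiFun p) + (q - aeval psiFun q) from by ring]
    exact add_mem hp hq
  | mul_X p v hp =>
    rw [map_mul, aeval_X]
    have hX : (X v : MvPolynomial (Fin n ⊕ (Unit ⊕ Fin kk)) k) - psiFun v
        ∈ Ideal.span (Igens hkn) := by
      rcases v with i | u | j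
      · by_cases h : (i : ℕ) < kk
        · show (X (Sum.inl i) : MvPolynomial (Fin n ⊕ (Unit ⊕ Fin kk)) k)
            - (if h' : (i : ℕ) < kk then _ else _) ∈ _
          rw [dif_pos h]
          exact gen_mem hkn i h
        · show (X (Sum.inl i) : MvPolynomial (Fin n ⊕ (Unit ⊕ Fin kk)) k)
            - (if h' : (i : ℕ) < kk then _ else _) ∈ _
          rw [dif_neg h, sub_self]
          exact zero_mem _
      · cases u; rw [show psiFun (Sum.inr (Sum.inl ()))
          = (X (Sum.inr (Sum.inl ())) : MvPolynomial (Fin n ⊕ (Unit ⊕ Fin kk)) k) from rfl,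
          sub_self]
        exact zero_mem _
      · rw [show psiFun (Sum.inr (Sum.inr j))
          = (X (Sum.inr (Sum.inr j)) : MvPolynomial (Fin n ⊕ (Unit ⊕ Fin kk)) k) from rfl,
          sub_self]
        exact zero_mem _
    rw [show p * X v - aeval psiFun p * psiFun v
        = (p - aeval psiFun p) * X v + aeval psiFun p * (X v - psiFun v) from by ring]
    exact add_mem (Ideal.mul_mem_right _ _ hp) (Ideal.mul_mem_left _ _ hX)

lemma phi_psi (hkn : kk ≤ n) (p : MvPolynomial (Fin n ⊕ (Unit ⊕ Fin kk)) k) :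
    aeval (R := k) (phiFun hkn) (aeval (R := k) psiFun p)
      = (aeval (phiFun hkn) p : LaurentPolynomial (MvPolynomial (Fin n) k)) := by
  induction p using MvPolynomial.induction_on with
  | C a => rw [aeval_C, MvPolynomial.algebraMap_eq, aeval_C]
  | add p q hp hq => rw [map_add, map_add, map_add, hp, hq]
  | mul_X p v hp =>
    rw [map_mul, map_mul, map_mul, aeval_X, aeval_X, hp]
    congr 1
    rcases v with i | u | j
    · by_cases h : (i : ℕ) < kk
      · show aeval (phiFun hkn) (if h' : (i : ℕ) < kk then _ else _) = _
        rw [dif_pos h, map_mul, aeval_X, aeval_X]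
        show LaurentPolynomial.T 1 *
            (LaurentPolynomial.C (X (Fin.castLE hkn ⟨i.1, h⟩)) * LaurentPolynomial.T (-1))
          = LaurentPolynomial.C (X i)
        rw [show Fin.castLE hkn (⟨i.1, h⟩ : Fin kk) = i from rfl,
          show (LaurentPolynomial.T 1 : LaurentPolynomial (MvPolynomial (Fin n) k)) *
              (LaurentPolynomial.C (X i) * LaurentPolynomial.T (-1))
            = LaurentPolynomial.C (X i) *
              (LaurentPolynomial.T 1 * LaurentPolynomial.T (-1)) from by ring,
          ← LaurentPolynomial.T_add]
        norm_num
      · show aeval (phiFun hkn) (if h' : (i : ℕ) < kk then _ else _) = _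
        rw [dif_neg h, aeval_X]
    · rw [show psiFun (Sum.inr (Sum.inl u))
        = (X (Sum.inr (Sum.inl u)) : MvPolynomial (Fin n ⊕ (Unit ⊕ Fin kk)) k) from rfl,
        aeval_X]
    · rw [show psiFun (Sum.inr (Sum.inr j))
        = (X (Sum.inr (Sum.inr j)) : MvPolynomial (Fin n ⊕ (Unit ⊕ Fin kk)) k) from rfl,
        aeval_X]

lemma psi_supported (p : MvPolynomial (Fin n ⊕ (Unit ⊕ Fin kk)) k) :
    (aeval psiFun p : MvPolynomial (Fin n ⊕ (Unit ⊕ Fin kk)) k)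
      ∈ supported k {v : Fin n ⊕ (Unit ⊕ Fin kk) | ∀ j : Fin n, v = Sum.inl j → kk ≤ j.1} := by
  induction p using MvPolynomial.induction_on with
  | C a => rw [aeval_C]; exact Subalgebra.algebraMap_mem _ a
  | add p q hp hq => rw [map_add]; exact add_mem hp hq
  | mul_X p v hp =>
    rw [map_mul, aeval_X]
    refine mul_mem hp ?_
    rcases v with i | u | j
    · by_cases h : (i : ℕ) < kk
      · show (if h' : (i : ℕ) < kk then _ else _) ∈ _
        rw [dif_pos h]
        refine mul_mem (X_mem_supported.mpr ?_) (X_mem_supported.mpr ?_)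
        · intro j hj; simp at hj
        · intro j hj; simp at hj
      · show (if h' : (i : ℕ) < kk then _ else _) ∈ _
        rw [dif_neg h]
        refine X_mem_supported.mpr ?_
        intro j hj
        injection hj with h'
        subst h'
        omega
    · exact X_mem_supported.mpr (fun j hj => by simp at hj)
    · exact X_mem_supported.mpr (fun j hj => by simp at hj)

lemma psi_good (p : MvPolynomial (Fin n ⊕ (Unit ⊕ Fin kk)) k) :
    ∀ m ∈ (aeval psiFun p : MvPolynomial (Fin n ⊕ (Unit ⊕ Fin kk)) k).support,
      ∀ j : Fin n, (j : ℕ) < kk → m (Sum.inl j) = 0 := by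
  intro m hm j hj
  by_contra hne
  have h1 : Sum.inl j ∈ (aeval psiFun p : MvPolynomial (Fin n ⊕ (Unit ⊕ Fin kk)) k).vars :=
    (mem_vars _).mpr ⟨m, hm, Finsupp.mem_support_iff.mpr hne⟩
  have h2 := (mem_supported.mp (psi_supported p)) h1
  exact absurd (h2 j rfl) (by omega)

/-- The extended Rees algebra as a subalgebra of Laurent polynomials. -/
noncomputable def rees (hkn : kk ≤ n) :
    Subalgebra k (LaurentPolynomial (MvPolynomial (Fin n) k)) where
  carrier := {x | ∀ d : ℤ, (AddMonoidAlgebra.coeff x : ℤ →₀ MvPolynomial (Fin n) k) d ∈ Jid hkn ^ (-d).toNat}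
  add_mem' := by
    intro x y hx hy d
    have : AddMonoidAlgebra.coeff (x + y : LaurentPolynomial (MvPolynomial (Fin n) k)) d
        = AddMonoidAlgebra.coeff x d + AddMonoidAlgebra.coeff y d := rfl
    rw [this]
    exact add_mem (hx d) (hy d)
  mul_mem' := by
    intro x y hx hy d
    rw [AddMonoidAlgebra.mul_apply]
    unfold Finsupp.sum
    refine Ideal.sum_mem _ fun d₁ _ => Ideal.sum_mem _ fun d₂ _ => ?_
    simp only
    split
    · next h =>
      have h1 : AddMonoidAlgebra.coeff x d₁ * AddMonoidAlgebra.coeff y d₂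
          ∈ Jid hkn ^ ((-d₁).toNat + (-d₂).toNat) := by
        rw [pow_add]
        exact Ideal.mul_mem_mul (hx d₁) (hy d₂)
      exact Ideal.pow_le_pow_right (by omega) h1
    · exact zero_mem _
  one_mem' := by
    intro d
    have : AddMonoidAlgebra.coeff (1 : LaurentPolynomial (MvPolynomial (Fin n) k)) d
        = Finsupp.single (0 : ℤ) (1 : MvPolynomial (Fin n) k) d := rfl
    rw [this, Finsupp.single_apply]
    split
    · next h => rw [← h]; simp
    · exact zero_mem _
  algebraMap_mem' := by
    intro r d
    have : AddMonoidAlgebra.coeff (algebraMap k (LaurentPolynomial (MvPolynomial (Fin n) k)) r) d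
        = Finsupp.single (0 : ℤ) (MvPolynomial.C r : MvPolynomial (Fin n) k) d := by
      rw [IsScalarTower.algebraMap_apply k (MvPolynomial (Fin n) k)]; rfl
    rw [this, Finsupp.single_apply]
    split
    · next h => rw [← h]; simp
    · exact zero_mem _

/-- `C a` is in the range of `φ`. -/
lemma C_mem_range (hkn : kk ≤ n) (a : MvPolynomial (Fin n) k) :
    LaurentPolynomial.C a ∈ (aeval (phiFun hkn) :
      MvPolynomial (Fin n ⊕ (Unit ⊕ Fin kk)) k →ₐ[k] _).range := by
  induction a using MvPolynomial.induction_on with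
  | C r =>
    exact ⟨MvPolynomial.C r, by
      show aeval (phiFun hkn) (MvPolynomial.C r) = _
      rw [aeval_C, algebraMap_L]⟩
  | add p q hp hq =>
    rw [map_add]; exact add_mem hp hq
  | mul_X p i hp =>
    rw [map_mul]
    exact mul_mem hp ⟨X (Sum.inl i), by
      show aeval (phiFun hkn) (X (Sum.inl i)) = _
      rw [aeval_X]; rfl⟩

lemma T_nat_mem_range (hkn : kk ≤ n) (m : ℕ) :
    (LaurentPolynomial.T (m : ℤ) : LaurentPolynomial (MvPolynomial (Fin n) k))
      ∈ (aeval (phiFun hkn) :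
        MvPolynomial (Fin n ⊕ (Unit ⊕ Fin kk)) k →ₐ[k] _).range := by
  refine ⟨(X (Sum.inr (Sum.inl ()))) ^ m, ?_⟩
  show aeval (phiFun hkn) (X (Sum.inr (Sum.inl ())) ^ m) = _
  rw [map_pow, aeval_X]
  show (LaurentPolynomial.T 1) ^ m = _
  rw [LaurentPolynomial.T_pow, mul_one]

lemma J_T_mem_range (hkn : kk ≤ n) (a : MvPolynomial (Fin n) k) (ha : a ∈ Jid hkn) :
    LaurentPolynomial.C a * LaurentPolynomial.T (-1)
      ∈ (aeval (phiFun hkn) :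
        MvPolynomial (Fin n ⊕ (Unit ⊕ Fin kk)) k →ₐ[k] _).range := by
  induction ha using Submodule.span_induction with
  | mem x hx =>
    obtain ⟨j, rfl⟩ := hx
    exact ⟨X (Sum.inr (Sum.inr j)), by
      show aeval (phiFun hkn) (X (Sum.inr (Sum.inr j))) = _
      rw [aeval_X]; rfl⟩
  | zero => rw [map_zero, zero_mul]; exact zero_mem _
  | add x y _ _ hx hy => rw [map_add, add_mul]; exact add_mem hx hy
  | smul r x _ hx =>
    rw [smul_eq_mul, map_mul, mul_assoc]
    exact mul_mem (C_mem_range hkn r) hx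

lemma Jpow_T_mem_range (hkn : kk ≤ n) (m : ℕ) (a : MvPolynomial (Fin n) k)
    (ha : a ∈ Jid hkn ^ m) :
    LaurentPolynomial.C a * LaurentPolynomial.T (-(m : ℤ))
      ∈ (aeval (phiFun hkn) :
        MvPolynomial (Fin n ⊕ (Unit ⊕ Fin kk)) k →ₐ[k] _).range := by
  induction m generalizing a with
  | zero =>
    simpa using C_mem_range hkn a
  | succ m ih =>
    rw [pow_succ] at ha
    refine Submodule.mul_induction_on ha ?_ ?_
    · intro p hp q hq
      have h1 : (-(((m : ℕ) + 1 : ℕ) : ℤ)) = -(m : ℤ) + (-1) := by push_cast; ring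
      have h2 : LaurentPolynomial.C (p * q) * LaurentPolynomial.T (-(((m : ℕ) + 1 : ℕ) : ℤ))
          = (LaurentPolynomial.C p * LaurentPolynomial.T (-(m : ℤ)))
            * (LaurentPolynomial.C q * LaurentPolynomial.T (-1)) := by
        rw [h1, LaurentPolynomial.T_add, map_mul]; ring
      rw [h2]
      exact mul_mem (ih p hp) (J_T_mem_range hkn q hq)
    · intro x y hx hy
      rw [map_add, add_mul]; exact add_mem hx hy

/-- Everything in the Rees algebra is in the range. -/
lemma rees_le_range (hkn : kk ≤ n) (x : LaurentPolynomial (MvPolynomial (Fin n) k))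
    (hx : ∀ d : ℤ, (AddMonoidAlgebra.coeff x : ℤ →₀ MvPolynomial (Fin n) k) d ∈ Jid hkn ^ (-d).toNat) :
    x ∈ (aeval (phiFun hkn) :
      MvPolynomial (Fin n ⊕ (Unit ⊕ Fin kk)) k →ₐ[k] _).range := by
  have hx' : x = ∑ d ∈ (AddMonoidAlgebra.coeff x : ℤ →₀ MvPolynomial (Fin n) k).support,
      (AddMonoidAlgebra.single d ((AddMonoidAlgebra.coeff x : ℤ →₀ MvPolynomial (Fin n) k) d) :
        LaurentPolynomial (MvPolynomial (Fin n) k)) := by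
    exact (AddMonoidAlgebra.sum_coeff_single x).symm
  rw [hx']
  refine sum_mem fun d _ => ?_
  rw [LaurentPolynomial.single_eq_C_mul_T]
  rcases le_or_gt 0 d with hd | hd
  · have : d = ((d.toNat : ℕ) : ℤ) := by omega
    rw [this]
    exact mul_mem (C_mem_range hkn _) (T_nat_mem_range hkn d.toNat)
  · have h1 : d = -(((-d).toNat : ℕ) : ℤ) := by omega
    have h2 := Jpow_T_mem_range hkn (-d).toNat _ (hx d)
    rwa [← h1] at h2

lemma mem_rees_iff (hkn : kk ≤ n) (x : LaurentPolynomial (MvPolynomial (Fin n) k)) :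
    x ∈ rees hkn ↔ ∀ d : ℤ, (AddMonoidAlgebra.coeff x : ℤ →₀ MvPolynomial (Fin n) k) d ∈ Jid hkn ^ (-d).toNat :=
  Iff.rfl

lemma phiFun_mem_rees (hkn : kk ≤ n) (v : Fin n ⊕ (Unit ⊕ Fin kk)) :
    phiFun (k := k) hkn v ∈ rees hkn := by
  rw [mem_rees_iff]
  rcases v with i | u | j
  · intro d
    rw [show AddMonoidAlgebra.coeff (phiFun (k := k) hkn (Sum.inl i) : LaurentPolynomial (MvPolynomial (Fin n) k))
        d = Finsupp.single (0 : ℤ) (X i : MvPolynomial (Fin n) k) d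
      from rfl, Finsupp.single_apply]
    split
    · next h => rw [← h]; simp
    · exact zero_mem _
  · intro d
    rw [show AddMonoidAlgebra.coeff (phiFun (k := k) hkn (Sum.inr (Sum.inl u)))
        d
        = Finsupp.single (1 : ℤ) (1 : MvPolynomial (Fin n) k) d from rfl,
      Finsupp.single_apply]
    split
    · next h => rw [← h]; simp
    · exact zero_mem _
  · intro d
    have h0 : AddMonoidAlgebra.coeff (phiFun (k := k) hkn (Sum.inr (Sum.inr j)))
        d
        = Finsupp.single (-1 : ℤ) (X (Fin.castLE hkn j) : MvPolynomial (Fin n) k) d := by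
      show AddMonoidAlgebra.coeff (LaurentPolynomial.C (X (Fin.castLE hkn j)) * LaurentPolynomial.T (-1) :
          LaurentPolynomial (MvPolynomial (Fin n) k)) d = _
      rw [← LaurentPolynomial.single_eq_C_mul_T, AddMonoidAlgebra.coeff_single]
    rw [h0, Finsupp.single_apply]
    split
    · next h =>
      rw [← h]
      norm_num
      exact Ideal.subset_span ⟨j, rfl⟩
    · exact zero_mem _

lemma range_le (hkn : kk ≤ n) (p : MvPolynomial (Fin n ⊕ (Unit ⊕ Fin kk)) k) :
    aeval (R := k) (phiFun (k := k) hkn) p ∈ rees hkn := by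
  induction p using MvPolynomial.induction_on with
  | C a => rw [aeval_C]; exact Subalgebra.algebraMap_mem _ a
  | add p q hp hq => rw [map_add]; exact add_mem hp hq
  | mul_X p v hp => rw [map_mul, aeval_X]; exact mul_mem hp (phiFun_mem_rees hkn v)

lemma range_iff (hkn : kk ≤ n) (x : LaurentPolynomial (MvPolynomial (Fin n) k)) :
    x ∈ (aeval (phiFun hkn) :
        MvPolynomial (Fin n ⊕ (Unit ⊕ Fin kk)) k →ₐ[k]
          LaurentPolynomial (MvPolynomial (Fin n) k)).range
      ↔ ∀ d : ℤ, (AddMonoidAlgebra.coeff x : ℤ →₀ MvPolynomial (Fin n) k) d ∈ Jid hkn ^ (-d).toNat := by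
  constructor
  · rintro ⟨p, rfl⟩
    exact (mem_rees_iff hkn _).mp (range_le hkn p)
  · exact rees_le_range hkn x

lemma ker_eq (hkn : kk ≤ n) :
    RingHom.ker (aeval (phiFun hkn) :
        MvPolynomial (Fin n ⊕ (Unit ⊕ Fin kk)) k →ₐ[k]
          LaurentPolynomial (MvPolynomial (Fin n) k)).toRingHom
      = Ideal.span (Igens hkn) := by
  apply le_antisymm
  · intro p hp
    have hp0 : aeval (R := k) (phiFun hkn) p
        = (0 : LaurentPolynomial (MvPolynomial (Fin n) k)) := hp
    have h1 : aeval (R := k) psiFun p = 0 :=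
      good_ker_zero hkn _ (psi_good p) (by rw [phi_psi hkn p]; exact hp0)
    have h2 := sub_psi_mem hkn p
    rwa [h1, sub_zero] at h2
  · rw [Ideal.span_le]
    rintro _ ⟨j, rfl⟩
    simp only [SetLike.mem_coe]
    have : aeval (R := k) (phiFun hkn)
        (X (.inl (Fin.castLE hkn j)) - X (.inr (.inl ())) * X (.inr (.inr j)))
        = (0 : LaurentPolynomial (MvPolynomial (Fin n) k)) := by
      rw [map_sub, map_mul, aeval_X, aeval_X, aeval_X]
      show LaurentPolynomial.C (X (Fin.castLE hkn j))
          - LaurentPolynomial.T 1 *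
            (LaurentPolynomial.C (X (Fin.castLE hkn j)) * LaurentPolynomial.T (-1)) = 0
      rw [show (LaurentPolynomial.T 1 : LaurentPolynomial (MvPolynomial (Fin n) k)) *
            (LaurentPolynomial.C (X (Fin.castLE hkn j)) * LaurentPolynomial.T (-1))
          = LaurentPolynomial.C (X (Fin.castLE hkn j)) *
            (LaurentPolynomial.T 1 * LaurentPolynomial.T (-1)) from by ring,
        ← LaurentPolynomial.T_add]
      norm_num
    exact this

lemma final (hkn : kk ≤ n)
    (f : Fin n ⊕ (Unit ⊕ Fin kk) → LaurentPolynomial (MvPolynomial (Fin n) k))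
    (hf : ∀ v, f v = phiFun hkn v) :
    RingHom.ker (aeval f :
        MvPolynomial (Fin n ⊕ (Unit ⊕ Fin kk)) k →ₐ[k]
          LaurentPolynomial (MvPolynomial (Fin n) k)).toRingHom
      = Ideal.span (Igens hkn) ∧
    ∀ x : LaurentPolynomial (MvPolynomial (Fin n) k),
      x ∈ (aeval f :
        MvPolynomial (Fin n ⊕ (Unit ⊕ Fin kk)) k →ₐ[k]
          LaurentPolynomial (MvPolynomial (Fin n) k)).range
      ↔ ∀ d : ℤ, (AddMonoidAlgebra.coeff x : ℤ →₀ MvPolynomial (Fin n) k) d ∈ Jid hkn ^ (-d).toNat := by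
  have hf' : f = phiFun hkn := funext hf
  subst hf'
  exact ⟨ker_eq hkn, range_iff hkn⟩

end ExtReesAux

/-- the extended Rees algebra presentation of the blowup. -/
theorem extended_rees_presentation {k : Type*} [Field k] {n kk : ℕ}
    (h1 : 1 ≤ kk) (hkn : kk ≤ n) :
    RingHom.ker (aeval
        (fun v : Fin n ⊕ (Unit ⊕ Fin kk) =>
          match v with
          | .inl i => LaurentPolynomial.C (X i)
          | .inr (.inl _) => (LaurentPolynomial.T 1 :
              LaurentPolynomial (MvPolynomial (Fin n) k))
          | .inr (.inr j) => LaurentPolynomial.C (X (Fin.castLE hkn j)) *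
              LaurentPolynomial.T (-1)) :
        MvPolynomial (Fin n ⊕ (Unit ⊕ Fin kk)) k →ₐ[k]
          LaurentPolynomial (MvPolynomial (Fin n) k)).toRingHom
      = Ideal.span (Set.range fun j : Fin kk =>
          (X (.inl (Fin.castLE hkn j)) -
            X (.inr (.inl ())) * X (.inr (.inr j)) :
              MvPolynomial (Fin n ⊕ (Unit ⊕ Fin kk)) k)) ∧
    ∀ x : LaurentPolynomial (MvPolynomial (Fin n) k),
      x ∈ (aeval
        (fun v : Fin n ⊕ (Unit ⊕ Fin kk) =>
          match v with
          | .inl i => LaurentPolynomial.C (X i)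
          | .inr (.inl _) => (LaurentPolynomial.T 1 :
              LaurentPolynomial (MvPolynomial (Fin n) k))
          | .inr (.inr j) => LaurentPolynomial.C (X (Fin.castLE hkn j)) *
              LaurentPolynomial.T (-1)) :
        MvPolynomial (Fin n ⊕ (Unit ⊕ Fin kk)) k →ₐ[k]
          LaurentPolynomial (MvPolynomial (Fin n) k)).range
      ↔ ∀ d : ℤ, (AddMonoidAlgebra.coeff x : ℤ →₀ MvPolynomial (Fin n) k) d ∈
          (Ideal.span (Set.range fun j : Fin kk =>
            (X (Fin.castLE hkn j) : MvPolynomial (Fin n) k))) ^ (-d).toNat := by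
  exact ExtReesAux.final hkn _ (fun v => by rcases v with i | u | j <;> rfl)
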